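/- Let H be an inner product space over ℂ, x, y ∈ H, γ, Γ ∈ ℂ with Re(Γ·conj(γ)) > 0. If Re⟨Γy − x, x − γy⟩ ≥ 0, then 0 ≤ ‖x‖²‖y‖² − |⟨x,y⟩|² ≤ (1/4)·(|Γ − γ|² / Re(Γ·conj(γ)))·|⟨x,y⟩|². -/

import Mathlib

open scoped InnerProductSpace ComplexConjugate

theorem stmt_10 {E : Type*} [NormedAddCommGroup E] [InnerProductSpace ℂ E]
    (x y : E) (γ Γ : ℂ) (hΓγ : 0 < (Γ * conj γ).re)
    (h : 0 ≤ (⟪Γ • y - x, x - γ • y⟫_ℂ).re) :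
    0 ≤ ‖x‖ ^ 2 * ‖y‖ ^ 2 - ‖⟪x, y⟫_ℂ‖ ^ 2 ∧
      ‖x‖ ^ 2 * ‖y‖ ^ 2 - ‖⟪x, y⟫_ℂ‖ ^ 2 ≤
        (1 / 4) * (‖Γ - γ‖ ^ 2 / (Γ * conj γ).re) * ‖⟪x, y⟫_ℂ‖ ^ 2 := by
  set t : ℂ := ⟪x, y⟫_ℂ with ht
  set d : ℝ := (Γ * conj γ).re with hd
  have hCS : ‖t‖ ^ 2 ≤ ‖x‖ ^ 2 * ‖y‖ ^ 2 := by
    have h2 : ‖t‖ ≤ ‖x‖ * ‖y‖ := norm_inner_le_norm (𝕜 := ℂ) x y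
    nlinarith [norm_nonneg t, norm_nonneg x, norm_nonneg y]
  refine ⟨by linarith, ?_⟩
  have hre : ‖x‖ ^ 2 + d * ‖y‖ ^ 2 ≤ ((Γ + γ) * t).re := by
    have hyy : ⟪y, y⟫_ℂ = ((‖y‖ ^ 2 : ℝ) : ℂ) := by
      rw [inner_self_eq_norm_sq_to_K]; norm_cast
    have hxx : ⟪x, x⟫_ℂ = ((‖x‖ ^ 2 : ℝ) : ℂ) := by
      rw [inner_self_eq_norm_sq_to_K]; norm_cast
    have h1 : (⟪Γ • y - x, x - γ • y⟫_ℂ).re =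
        ((Γ + γ) * t).re - d * ‖y‖ ^ 2 - ‖x‖ ^ 2 := by
      simp only [inner_sub_left, inner_sub_right, inner_smul_left, inner_smul_right,
        hyy, hxx, ← inner_conj_symm x y, ht, hd]
      simp only [Complex.add_re, Complex.add_im, Complex.sub_re, Complex.sub_im,
        Complex.mul_re, Complex.mul_im, Complex.conj_re, Complex.conj_im,
        Complex.ofReal_re, Complex.ofReal_im]
      ring
    linarith [h, h1.le]
  have hre2 : ((Γ + γ) * t).re ≤ ‖Γ + γ‖ * ‖t‖ := by
    calc ((Γ + γ) * t).re ≤ ‖(Γ + γ) * t‖ := Complex.re_le_norm _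
      _ = ‖Γ + γ‖ * ‖t‖ := norm_mul _ _
  have hkey : ‖x‖ ^ 2 + d * ‖y‖ ^ 2 ≤ ‖Γ + γ‖ * ‖t‖ :=
    hre.trans hre2
  have hdpos : 0 < d := hΓγ
  have hsd : Real.sqrt d ^ 2 = d := Real.sq_sqrt hdpos.le
  have hamgm : 2 * Real.sqrt d * (‖x‖ * ‖y‖) ≤ ‖x‖ ^ 2 + d * ‖y‖ ^ 2 := by
    nlinarith [sq_nonneg (‖x‖ - Real.sqrt d * ‖y‖)]
  have hsq : 4 * d * (‖x‖ ^ 2 * ‖y‖ ^ 2) ≤ ‖Γ + γ‖ ^ 2 * ‖t‖ ^ 2 := by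
    have hL : 0 ≤ 2 * Real.sqrt d * (‖x‖ * ‖y‖) := by positivity
    have hc := hamgm.trans hkey
    nlinarith [hc, hL]
  have habs : ‖Γ + γ‖ ^ 2 = ‖Γ - γ‖ ^ 2 + 4 * d := by
    simp only [Complex.sq_norm, Complex.normSq_apply, Complex.add_re, Complex.add_im,
      Complex.sub_re, Complex.sub_im, hd, Complex.mul_re, Complex.conj_re, Complex.conj_im]
    ring
  rw [habs] at hsq
  have h4 : (1 / 4 : ℝ) * (‖Γ - γ‖ ^ 2 / d) * ‖t‖ ^ 2 =
      (‖Γ - γ‖ ^ 2 * ‖t‖ ^ 2) / (4 * d) := by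
    field_simp
  rw [h4, le_div_iff₀ (by positivity)]
  nlinarith [hsq]
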